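/- Let f0 : GF(3)³ → GF(3) be defined by f0(x1, x2, 0) = x1 − x2, f0(x1, x2, 1) = 1 if (x1, x2) = (2, 0) and 0 otherwise, and f0(x1, x2, 2) = 0 if (x1, x2) = (0, 2) and 1 otherwise. For every k ≥ 1 and every a3 ∈ GF(3)^k, letting m := |{i ∈ {1,…,k} : a3^{(i)} ≠ 0}|, the base-2 entropy of the distribution assigning each equivalence class C of ≡^{a3}|_1 on GF(3)^k the probability |C|/3^k satisfies ∑_{C} (|C|/3^k)·log₂(3^k/|C|) = k·log₂ 3 − 2m/3. -/

import Mathlib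

open Classical

/-- A zero-error (variable-length) code for computing `f` componentwise with block length `k`
on the diamond network: encoders `phi31, phi32` (from `s₃`), `phi1, phi2` (to the terminal)
and a decoder `psi` that recovers `f^k` with zero error. -/
structure ZECode (A B Z : Type*) (k : ℕ) (f : A → A → A → B) where
  phi31 : (Fin k → A) → List Z
  phi32 : (Fin k → A) → List Z
  phi1 : (Fin k → A) → List Z → List Z
  phi2 : (Fin k → A) → List Z → List Z
  psi : List Z → List Z → (Fin k → B)
  zero_error : ∀ x1 x2 x3 : Fin k → A,
    psi (phi1 x1 (phi31 x3)) (phi2 x2 (phi32 x3)) = fun i => f (x1 i) (x2 i) (x3 i)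

/-- Base-2 Shannon entropy of the random variable `W` when the underlying finite sample
space `Ω` carries the uniform distribution (convention `0·log(1/0) = 0`). -/
noncomputable def uH {Ω S : Type*} [Fintype Ω] (W : Ω → S) : ℝ :=
  ∑ s ∈ Finset.univ.image W,
    (((Finset.univ.filter fun ω => W ω = s).card : ℝ) / (Fintype.card Ω : ℝ)) *
      Real.logb 2 ((Fintype.card Ω : ℝ) / ((Finset.univ.filter fun ω => W ω = s).card : ℝ))

/-- Base-2 conditional Shannon entropy `H(W | V)` for the uniform distribution on `Ω`:
`H(W|V) = ∑_v P(V = v) · H(W | V = v)`, with the convention `0·log(1/0) = 0`. -/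
noncomputable def uCondH {Ω S T : Type*} [Fintype Ω] (W : Ω → S) (V : Ω → T) : ℝ :=
  ∑ v ∈ Finset.univ.image V, ∑ s ∈ Finset.univ.image W,
    (((Finset.univ.filter fun ω => W ω = s ∧ V ω = v).card : ℝ) / (Fintype.card Ω : ℝ)) *
      Real.logb 2 (((Finset.univ.filter fun ω => V ω = v).card : ℝ) /
        ((Finset.univ.filter fun ω => W ω = s ∧ V ω = v).card : ℝ))

/-- `x1 ≡^{a3} y1 |₁` : `f(x1, x2, a3) = f(y1, x2, a3)` for all `x2`. -/
def eqv1 {A B : Type*} (f : A → A → A → B) (a3 : A) (x y : A) : Prop :=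
  ∀ x2, f x x2 a3 = f y x2 a3

/-- `x2 ≡^{a3} y2 |₂` : `f(x1, x2, a3) = f(x1, y2, a3)` for all `x1`. -/
def eqv2 {A B : Type*} (f : A → A → A → B) (a3 : A) (x y : A) : Prop :=
  ∀ x1, f x1 x a3 = f x1 y a3

/-- Componentwise extension of `≡^{a3}|₁` to blocks of length `k`. -/
def eqv1k {A B : Type*} (f : A → A → A → B) {k : ℕ} (a3 : Fin k → A) (x y : Fin k → A) : Prop :=
  ∀ i, eqv1 f (a3 i) (x i) (y i)

/-- Componentwise extension of `≡^{a3}|₂` to blocks of length `k`. -/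
def eqv2k {A B : Type*} (f : A → A → A → B) {k : ℕ} (a3 : Fin k → A) (x y : Fin k → A) : Prop :=
  ∀ i, eqv2 f (a3 i) (x i) (y i)

/-- `≡^{a3}|₁` as a setoid on `A`. -/
def eqv1Setoid {A B : Type*} (f : A → A → A → B) (a3 : A) : Setoid A where
  r := eqv1 f a3
  iseqv := ⟨fun _ _ => rfl, fun h x2 => (h x2).symm, fun h h' x2 => (h x2).trans (h' x2)⟩

/-- `≡^{a3}|₂` as a setoid on `A`. -/
def eqv2Setoid {A B : Type*} (f : A → A → A → B) (a3 : A) : Setoid A where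
  r := eqv2 f a3
  iseqv := ⟨fun _ _ => rfl, fun h x1 => (h x1).symm, fun h h' x1 => (h x1).trans (h' x1)⟩

/-- `≡^{a3}|₁` as a setoid on `A^k`. -/
def eqv1kSetoid {A B : Type*} (f : A → A → A → B) {k : ℕ} (a3 : Fin k → A) :
    Setoid (Fin k → A) where
  r := eqv1k f a3
  iseqv := ⟨fun _ _ _ => rfl, fun h i x2 => (h i x2).symm,
    fun h h' i x2 => (h i x2).trans (h' i x2)⟩

/-- `≡^{a3}|₂` as a setoid on `A^k`. -/
def eqv2kSetoid {A B : Type*} (f : A → A → A → B) {k : ℕ} (a3 : Fin k → A) :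
    Setoid (Fin k → A) where
  r := eqv2k f a3
  iseqv := ⟨fun _ _ _ => rfl, fun h i x1 => (h i x1).symm,
    fun h h' i x1 => (h i x1).trans (h' i x1)⟩

/-- The example demand function `f0 : GF(3)³ → GF(3)` of Table I:
`f0(x1, x2, 0) = x1 - x2`; `f0(x1, x2, 1) = 1` iff `(x1, x2) = (2, 0)` else `0`;
`f0(x1, x2, 2) = 0` iff `(x1, x2) = (0, 2)` else `1`. -/
def f0 (x1 x2 x3 : ZMod 3) : ZMod 3 :=
  if x3 = 0 then x1 - x2
  else if x3 = 1 then (if x1 = 2 ∧ x2 = 0 then 1 else 0)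
  else (if x1 = 0 ∧ x2 = 2 then 0 else 1)

def csz (a x : ZMod 3) : ℕ :=
  if a = 0 then 1 else if (a = 1 ∧ x = 2) ∨ (a = 2 ∧ x = 0) then 1 else 2

lemma card_fiber1' : ∀ a x : ZMod 3,
    (Finset.univ.filter fun y : ZMod 3 => ∀ x2, f0 y x2 a = f0 x x2 a).card = csz a x := by
  decide

lemma card_fiber1 (a x : ZMod 3) :
    (Finset.univ.filter fun y : ZMod 3 => eqv1 f0 a y x).card = csz a x := by
  have h : (Finset.univ.filter fun y : ZMod 3 => eqv1 f0 a y x)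
      = (Finset.univ.filter fun y => ∀ x2, f0 y x2 a = f0 x x2 a) :=
    Finset.filter_congr fun y _ => Iff.rfl
  rw [h]; exact card_fiber1' a x

lemma csz_pos (a x : ZMod 3) : 0 < csz a x := by
  unfold csz; split <;> [norm_num; split <;> norm_num]

lemma zmod3_sum (g : ZMod 3 → ℝ) : ∑ t : ZMod 3, g t = g 0 + g 1 + g 2 := by
  show ∑ t : Fin 3, g t = _
  exact Fin.sum_univ_three g

lemma sum_logb_csz (a : ZMod 3) :
    ∑ t : ZMod 3, Real.logb 2 (csz a t) = if a = 0 then 0 else 2 := by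
  rw [zmod3_sum]
  rcases (by decide : ∀ b : ZMod 3, b = 0 ∨ b = 1 ∨ b = 2) a with rfl | rfl | rfl
  · norm_num [show csz 0 0 = 1 from rfl, show csz 0 1 = 1 from rfl, show csz 0 2 = 1 from rfl]
  · rw [show csz 1 0 = 2 from rfl, show csz 1 1 = 2 from rfl, show csz 1 2 = 1 from rfl,
      if_neg (by decide : ¬(1 : ZMod 3) = 0)]
    norm_num [Real.logb_self_eq_one]
  · rw [show csz 2 0 = 1 from rfl, show csz 2 1 = 2 from rfl, show csz 2 2 = 2 from rfl,
      if_neg (by decide : ¬(2 : ZMod 3) = 0)]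
    norm_num [Real.logb_self_eq_one]

lemma fiberk_card {k : ℕ} (a3 x : Fin k → ZMod 3) :
    (Finset.univ.filter fun y : Fin k → ZMod 3 =>
      Quotient.mk (eqv1kSetoid f0 a3) y = Quotient.mk (eqv1kSetoid f0 a3) x).card
      = ∏ i, csz (a3 i) (x i) := by
  have h1 : (Finset.univ.filter fun y : Fin k → ZMod 3 =>
      Quotient.mk (eqv1kSetoid f0 a3) y = Quotient.mk (eqv1kSetoid f0 a3) x)
      = Fintype.piFinset (fun i => Finset.univ.filter fun t => eqv1 f0 (a3 i) t (x i)) := by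
    ext y
    simp only [Finset.mem_filter, Finset.mem_univ, true_and, Fintype.mem_piFinset]
    rw [Quotient.eq]
    exact Iff.rfl
  rw [h1, Fintype.card_piFinset]
  exact Finset.prod_congr rfl fun i _ => card_fiber1 (a3 i) (x i)

lemma card_eval_fiber {k : ℕ} (i : Fin k) (t : ZMod 3) :
    (Finset.univ.filter fun x : Fin k → ZMod 3 => x i = t).card = 3 ^ (k - 1) := by
  have h1 : (Finset.univ.filter fun x : Fin k → ZMod 3 => x i = t)
      = Fintype.piFinset (fun j => if j = i then {t} else Finset.univ) := by
    ext x
    simp only [Finset.mem_filter, Finset.mem_univ, true_and, Fintype.mem_piFinset]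
    constructor
    · intro h j
      by_cases hj : j = i
      · subst hj; simp [h]
      · simp [hj]
    · intro h
      have := h i
      simpa using this
  rw [h1, Fintype.card_piFinset,
    ← Finset.mul_prod_erase Finset.univ _ (Finset.mem_univ i), if_pos rfl]
  rw [Finset.prod_congr rfl (fun j hj => by
    rw [if_neg (Finset.ne_of_mem_erase hj)])]
  simp [Finset.card_erase_of_mem]

lemma sum_eval {k : ℕ} (i : Fin k) (g : ZMod 3 → ℝ) :
    ∑ x : Fin k → ZMod 3, g (x i) = 3 ^ (k - 1) * ∑ t : ZMod 3, g t := by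
  rw [Finset.sum_comp g (fun x : Fin k → ZMod 3 => x i)]
  rw [Finset.image_univ_of_surjective (fun t => ⟨fun _ => t, rfl⟩)]
  rw [Finset.mul_sum]
  exact Finset.sum_congr rfl fun t _ => by
    rw [card_eval_fiber, nsmul_eq_mul]; push_cast; ring

lemma stepA {k : ℕ} (a3 : Fin k → ZMod 3) :
    ∑ q ∈ Finset.univ.image (Quotient.mk (eqv1kSetoid f0 a3)),
      (((Finset.univ.filter fun x : Fin k → ZMod 3 =>
          Quotient.mk (eqv1kSetoid f0 a3) x = q).card : ℝ) / 3 ^ k) *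
        Real.logb 2 ((3 : ℝ) ^ k /
          ((Finset.univ.filter fun x : Fin k → ZMod 3 =>
            Quotient.mk (eqv1kSetoid f0 a3) x = q).card : ℝ))
    = ∑ x : Fin k → ZMod 3,
        (1 / (3:ℝ)^k) * Real.logb 2 ((3:ℝ)^k / ((∏ i, csz (a3 i) (x i) : ℕ) : ℝ)) := by
  have h1 := Finset.sum_comp (s := (Finset.univ : Finset (Fin k → ZMod 3)))
    (fun q : Quotient (eqv1kSetoid f0 a3) => (1/(3:ℝ)^k) * Real.logb 2 ((3:ℝ)^k /
      ((Finset.univ.filter fun x : Fin k → ZMod 3 =>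
        Quotient.mk (eqv1kSetoid f0 a3) x = q).card : ℝ)))
    (Quotient.mk (eqv1kSetoid f0 a3))
  calc ∑ q ∈ Finset.univ.image (Quotient.mk (eqv1kSetoid f0 a3)),
      (((Finset.univ.filter fun x : Fin k → ZMod 3 =>
          Quotient.mk (eqv1kSetoid f0 a3) x = q).card : ℝ) / 3 ^ k) *
        Real.logb 2 ((3 : ℝ) ^ k /
          ((Finset.univ.filter fun x : Fin k → ZMod 3 =>
            Quotient.mk (eqv1kSetoid f0 a3) x = q).card : ℝ))
      = ∑ q ∈ Finset.univ.image (Quotient.mk (eqv1kSetoid f0 a3)),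
        (Finset.univ.filter fun x : Fin k → ZMod 3 =>
          Quotient.mk (eqv1kSetoid f0 a3) x = q).card •
        ((1/(3:ℝ)^k) * Real.logb 2 ((3:ℝ)^k /
          ((Finset.univ.filter fun x : Fin k → ZMod 3 =>
            Quotient.mk (eqv1kSetoid f0 a3) x = q).card : ℝ))) :=
      Finset.sum_congr rfl fun q _ => by rw [nsmul_eq_mul]; ring
    _ = ∑ x : Fin k → ZMod 3, (1/(3:ℝ)^k) * Real.logb 2 ((3:ℝ)^k /
          ((Finset.univ.filter fun y : Fin k → ZMod 3 =>
            Quotient.mk (eqv1kSetoid f0 a3) y = Quotient.mk (eqv1kSetoid f0 a3) x).card : ℝ)) :=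
      h1.symm
    _ = ∑ x : Fin k → ZMod 3,
        (1 / (3:ℝ)^k) * Real.logb 2 ((3:ℝ)^k / ((∏ i, csz (a3 i) (x i) : ℕ) : ℝ)) :=
      Finset.sum_congr rfl fun x _ => by rw [fiberk_card a3 x]

/-- The base-2 entropy of the `≡^{a3}|₁` equivalence-class-size distribution
on `GF(3)^k` equals `k·log₂ 3 − 2m/3`, where `m` is the number of nonzero components of `a3`. -/
theorem stmt_13 {k : ℕ} (hk : 1 ≤ k) (a3 : Fin k → ZMod 3) :
    ∑ q ∈ Finset.univ.image (Quotient.mk (eqv1kSetoid f0 a3)),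
      (((Finset.univ.filter fun x : Fin k → ZMod 3 =>
          Quotient.mk (eqv1kSetoid f0 a3) x = q).card : ℝ) / 3 ^ k) *
        Real.logb 2 ((3 : ℝ) ^ k /
          ((Finset.univ.filter fun x : Fin k → ZMod 3 =>
            Quotient.mk (eqv1kSetoid f0 a3) x = q).card : ℝ)) =
      k * Real.logb 2 3 - 2 * ((Finset.univ.filter fun i => a3 i ≠ 0).card : ℝ) / 3 := by
  rw [stepA a3]
  have hnpos : ∀ x : Fin k → ZMod 3, 0 < ∏ i, csz (a3 i) (x i) :=
    fun x => Finset.prod_pos fun i _ => csz_pos _ _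
  have h3k : ((3:ℝ))^k ≠ 0 := by positivity
  have key2 : ∑ x : Fin k → ZMod 3, Real.logb 2 ((∏ i, csz (a3 i) (x i) : ℕ) : ℝ)
      = 3^(k-1) * (2 * ((Finset.univ.filter fun i => a3 i ≠ 0).card : ℝ)) := by
    have hlog : ∀ x : Fin k → ZMod 3,
        Real.logb 2 ((∏ i, csz (a3 i) (x i) : ℕ) : ℝ)
        = ∑ i, Real.logb 2 ((csz (a3 i) (x i) : ℝ)) := by
      intro x
      push_cast
      exact Real.logb_prod _ _ fun i _ => by
        exact_mod_cast (csz_pos (a3 i) (x i)).ne'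
    calc ∑ x : Fin k → ZMod 3, Real.logb 2 ((∏ i, csz (a3 i) (x i) : ℕ) : ℝ)
        = ∑ x : Fin k → ZMod 3, ∑ i, Real.logb 2 ((csz (a3 i) (x i) : ℝ)) :=
          Finset.sum_congr rfl fun x _ => hlog x
      _ = ∑ i, ∑ x : Fin k → ZMod 3, Real.logb 2 ((csz (a3 i) (x i) : ℝ)) :=
          Finset.sum_comm
      _ = ∑ i, (3:ℝ)^(k-1) * ∑ t : ZMod 3, Real.logb 2 ((csz (a3 i) t : ℝ)) :=
          Finset.sum_congr rfl fun i _ =>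
            sum_eval i (fun t => Real.logb 2 ((csz (a3 i) t : ℕ) : ℝ))
      _ = ∑ i, (3:ℝ)^(k-1) * (if a3 i = 0 then 0 else 2) := by
          simp_rw [sum_logb_csz]
      _ = (3:ℝ)^(k-1) * ∑ i, (if a3 i = 0 then (0:ℝ) else 2) := by
          rw [Finset.mul_sum]
      _ = 3^(k-1) * (2 * ((Finset.univ.filter fun i => a3 i ≠ 0).card : ℝ)) := by
          have h5 : ∑ i, (if a3 i = 0 then (0:ℝ) else 2)
              = ∑ i ∈ Finset.univ.filter (fun i => a3 i ≠ 0), (2:ℝ) := by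
            rw [Finset.sum_filter]
            exact Finset.sum_congr rfl fun i _ => by
              by_cases h : a3 i = 0 <;> simp [h]
          rw [h5, Finset.sum_const, nsmul_eq_mul]
          ring
  have key1 : ∀ x : Fin k → ZMod 3,
      Real.logb 2 ((3:ℝ)^k / ((∏ i, csz (a3 i) (x i) : ℕ) : ℝ))
      = k * Real.logb 2 3 - Real.logb 2 ((∏ i, csz (a3 i) (x i) : ℕ) : ℝ) := by
    intro x
    rw [Real.logb_div h3k (by exact_mod_cast (hnpos x).ne'), Real.logb_pow]
  simp_rw [key1, mul_sub]
  rw [Finset.sum_sub_distrib, Finset.sum_const, ← Finset.mul_sum, key2,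
    nsmul_eq_mul, Finset.card_univ]
  have hcard : (Fintype.card (Fin k → ZMod 3) : ℝ) = (3:ℝ)^k := by
    simp [Fintype.card_fun]
  rw [hcard]
  have hsplit : (3:ℝ)^k = 3^(k-1) * 3 := by
    rw [← pow_succ, Nat.sub_add_cancel hk]
  rw [hsplit]
  have h31 : ((3:ℝ))^(k-1) ≠ 0 := by positivity
  field_simp
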